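/- Let ξ be a small-scale control semigroup and S a control semigroup, so that Link(ξ, S) is a global control semigroup. Then for every metric space X: dim_{Link(ξ,S)} X = max{smdim_ξ X, asdim_S X}. -/

import Mathlib

open Filter Set Metric Topology
open scoped NNReal ENNReal

/-- A large-scale (asymptotic) dim-control function: continuous, increasing,
eventually at least the identity, tending to infinity. -/
def IsLSControl (f : ℝ≥0 → ℝ≥0) : Prop :=
  Continuous f ∧ Monotone f ∧ (∀ᶠ x in atTop, x ≤ f x) ∧ Tendsto f atTop atTop

/-- Asymptotically linear: coincides with a linear function on a neighborhood of infinity. -/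
def IsAsympLinear (f : ℝ≥0 → ℝ≥0) : Prop :=
  ∃ a b : ℝ≥0, ∀ᶠ x in atTop, f x = a * x + b

/-- A (large-scale) control semigroup. -/
def IsControlSemigroup (S : Set (ℝ≥0 → ℝ≥0)) : Prop :=
  (∀ f ∈ S, IsLSControl f) ∧
  (∀ f, IsLSControl f → IsAsympLinear f → f ∈ S) ∧
  (∀ f ∈ S, ∀ g ∈ S, f ∘ g ∈ S)

/-- A family of subsets is `s`-disjoint if distinct members are at distance `> s`. -/
def SDisjoint {X : Type*} [MetricSpace X] (s : ℝ≥0) (𝒰 : Set (Set X)) : Prop :=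
  ∀ U ∈ 𝒰, ∀ V ∈ 𝒰, U ≠ V → ∀ x ∈ U, ∀ y ∈ V, (s : ℝ) < dist x y

/-- A family of subsets is `D`-bounded if each member has diameter at most `D`. -/
def BoundedBy {X : Type*} [MetricSpace X] (D : ℝ≥0) (𝒰 : Set (Set X)) : Prop :=
  ∀ U ∈ 𝒰, EMetric.diam U ≤ (D : ℝ≥0∞)

/-- `asdim_S X ≤ n`. -/
def ASDimLE (S : Set (ℝ≥0 → ℝ≥0)) (X : Type*) [MetricSpace X] (n : ℕ) : Prop :=
  ∃ f ∈ S, ∃ s₀ : ℝ≥0, ∀ s : ℝ≥0, s₀ ≤ s →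
    ∃ 𝒰 : Fin (n + 1) → Set (Set X),
      (⋃ i, ⋃₀ 𝒰 i) = univ ∧ ∀ i, SDisjoint s (𝒰 i) ∧ BoundedBy (f s) (𝒰 i)

/-- The `S`-controlled asymptotic dimension, as an element of `ℕ∞`. -/
noncomputable def ASDim (S : Set (ℝ≥0 → ℝ≥0)) (X : Type*) [MetricSpace X] : ℕ∞ :=
  sInf {k : ℕ∞ | ∃ n : ℕ, k = n ∧ ASDimLE S X n}

/-- `S₁ ⪯ S₂` : `S₂` is finer than `S₁`. -/
def Preceq (S₁ S₂ : Set (ℝ≥0 → ℝ≥0)) : Prop :=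
  ∀ f ∈ S₂, ∃ g ∈ S₁, ∀ᶠ x in atTop, f x ≤ g x

/-- A small-scale dim-control function. -/
def IsSSControl (f : ℝ≥0 → ℝ≥0) : Prop :=
  Continuous f ∧ Monotone f ∧ f 0 = 0 ∧ ∀ᶠ x in 𝓝[>] (0 : ℝ≥0), x ≤ f x

/-- Coincides with a linear function on a neighborhood of `0`. -/
def IsLinearNearZero (f : ℝ≥0 → ℝ≥0) : Prop :=
  ∃ a b : ℝ≥0, ∀ᶠ x in 𝓝 (0 : ℝ≥0), f x = a * x + b

/-- A small-scale control semigroup. -/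
def IsSSControlSemigroup (ξ : Set (ℝ≥0 → ℝ≥0)) : Prop :=
  (∀ f ∈ ξ, IsSSControl f) ∧
  (∀ f, IsSSControl f → IsLinearNearZero f → f ∈ ξ) ∧
  (∀ f ∈ ξ, ∀ g ∈ ξ, f ∘ g ∈ ξ)

/-- A global dim-control function. -/
def IsGlobalControl (f : ℝ≥0 → ℝ≥0) : Prop :=
  Continuous f ∧ Monotone f ∧ f 0 = 0 ∧ Tendsto f atTop atTop ∧
    (∀ᶠ x in 𝓝[>] (0 : ℝ≥0), x ≤ f x) ∧ (∀ᶠ x in atTop, x ≤ f x)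

/-- A global control semigroup. -/
def IsGlobalControlSemigroup (S : Set (ℝ≥0 → ℝ≥0)) : Prop :=
  (∀ f ∈ S, IsGlobalControl f) ∧
  (∀ f, IsGlobalControl f → IsLinearNearZero f → IsAsympLinear f → f ∈ S) ∧
  (∀ f ∈ S, ∀ g ∈ S, f ∘ g ∈ S)

/-- `smdim_ξ X ≤ n`. -/
def SMDimLE (ξ : Set (ℝ≥0 → ℝ≥0)) (X : Type*) [MetricSpace X] (n : ℕ) : Prop :=
  ∃ f ∈ ξ, ∃ s₀ : ℝ≥0, 0 < s₀ ∧ ∀ s : ℝ≥0, 0 < s → s ≤ s₀ →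
    ∃ 𝒰 : Fin (n + 1) → Set (Set X),
      (⋃ i, ⋃₀ 𝒰 i) = univ ∧ ∀ i, SDisjoint s (𝒰 i) ∧ BoundedBy (f s) (𝒰 i)

/-- The `ξ`-controlled small-scale dimension. -/
noncomputable def SMDim (ξ : Set (ℝ≥0 → ℝ≥0)) (X : Type*) [MetricSpace X] : ℕ∞ :=
  sInf {k : ℕ∞ | ∃ n : ℕ, k = n ∧ SMDimLE ξ X n}

/-- `dim_S̄ X ≤ n` (global dimension). -/
def GDimLE (S : Set (ℝ≥0 → ℝ≥0)) (X : Type*) [MetricSpace X] (n : ℕ) : Prop :=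
  ∃ f ∈ S, ∀ s : ℝ≥0, 0 < s →
    ∃ 𝒰 : Fin (n + 1) → Set (Set X),
      (⋃ i, ⋃₀ 𝒰 i) = univ ∧ ∀ i, SDisjoint s (𝒰 i) ∧ BoundedBy (f s) (𝒰 i)

/-- The `S̄`-controlled global dimension. -/
noncomputable def GDim (S : Set (ℝ≥0 → ℝ≥0)) (X : Type*) [MetricSpace X] : ℕ∞ :=
  sInf {k : ℕ∞ | ∃ n : ℕ, k = n ∧ GDimLE S X n}

/-- Large-scale truncation `Trunc^{**}(S̄)`. -/
def TruncInf (S : Set (ℝ≥0 → ℝ≥0)) : Set (ℝ≥0 → ℝ≥0) :=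
  {g | IsLSControl g ∧ ∃ f ∈ S, ∀ᶠ x in atTop, g x = f x}

/-- Small-scale truncation `Trunc_{**}(S̄)`. -/
def TruncZero (S : Set (ℝ≥0 → ℝ≥0)) : Set (ℝ≥0 → ℝ≥0) :=
  {g | IsSSControl g ∧ ∃ f ∈ S, ∀ᶠ x in 𝓝 (0 : ℝ≥0), g x = f x}

/-- The linked set `Link(ξ, S)`. -/
def Link (ξ S : Set (ℝ≥0 → ℝ≥0)) : Set (ℝ≥0 → ℝ≥0) :=
  {g | Continuous g ∧ Monotone g ∧
    ∃ g₁ ∈ ξ, ∃ g₂ ∈ S, (∀ᶠ x in 𝓝 (0 : ℝ≥0), g x = g₁ x) ∧ (∀ᶠ x in atTop, g x = g₂ x)}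

/-! ### Auxiliary lemmas -/

lemma sdisjoint_of_le {X : Type*} [MetricSpace X] {s s' : ℝ≥0} {𝒰 : Set (Set X)}
    (h : s ≤ s') (hd : SDisjoint s' 𝒰) : SDisjoint s 𝒰 := by
  intro U hU V hV hUV x hx y hy
  exact lt_of_le_of_lt (NNReal.coe_le_coe.mpr h) (hd U hU V hV hUV x hx y hy)

lemma boundedBy_of_le {X : Type*} [MetricSpace X] {D D' : ℝ≥0} {𝒰 : Set (Set X)}
    (h : D ≤ D') (hb : BoundedBy D 𝒰) : BoundedBy D' 𝒰 :=
  fun U hU => (hb U hU).trans (ENNReal.coe_le_coe.mpr h)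

lemma sdisjoint_empty {X : Type*} [MetricSpace X] (s : ℝ≥0) :
    SDisjoint s (∅ : Set (Set X)) := fun U hU => absurd hU (Set.notMem_empty U)

lemma boundedBy_empty {X : Type*} [MetricSpace X] (D : ℝ≥0) :
    BoundedBy D (∅ : Set (Set X)) := fun U hU => absurd hU (Set.notMem_empty U)

lemma cover_extend {X : Type*} [MetricSpace X] {n m : ℕ} (hnm : n ≤ m)
    {s D : ℝ≥0} (𝒰 : Fin (n+1) → Set (Set X)) (hu : (⋃ i, ⋃₀ 𝒰 i) = univ)
    (hp : ∀ i, SDisjoint s (𝒰 i) ∧ BoundedBy D (𝒰 i)) :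
    ∃ 𝒱 : Fin (m+1) → Set (Set X), (⋃ i, ⋃₀ 𝒱 i) = univ ∧
      ∀ i, SDisjoint s (𝒱 i) ∧ BoundedBy D (𝒱 i) := by
  refine ⟨fun i => if h : (i : ℕ) < n + 1 then 𝒰 ⟨i, h⟩ else ∅, ?_, ?_⟩
  · apply eq_univ_of_forall
    intro x
    have hx : x ∈ ⋃ i, ⋃₀ 𝒰 i := hu ▸ mem_univ x
    obtain ⟨_, ⟨j, rfl⟩, hxj⟩ := hx
    refine mem_iUnion.mpr ⟨⟨(j : ℕ), j.2.trans_le (Nat.succ_le_succ hnm)⟩, ?_⟩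
    have hj : ((⟨(j : ℕ), j.2.trans_le (Nat.succ_le_succ hnm)⟩ : Fin (m+1)) : ℕ) < n + 1 := j.2
    simp only [hj, dif_pos]
    exact hxj
  · intro i
    by_cases h : (i : ℕ) < n + 1
    · simpa only [h, dif_pos] using hp ⟨i, h⟩
    · simp only [h, dif_neg, not_false_iff]
      exact ⟨sdisjoint_empty s, boundedBy_empty D⟩

lemma smdimLE_mono {ξ : Set (ℝ≥0 → ℝ≥0)} {X : Type*} [MetricSpace X] {n m : ℕ}
    (hnm : n ≤ m) (h : SMDimLE ξ X n) : SMDimLE ξ X m := by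
  obtain ⟨f, hf, s₀, hs₀, H⟩ := h
  refine ⟨f, hf, s₀, hs₀, fun s hs hss => ?_⟩
  obtain ⟨𝒰, hu, hp⟩ := H s hs hss
  exact cover_extend hnm 𝒰 hu hp

lemma asdimLE_mono {S : Set (ℝ≥0 → ℝ≥0)} {X : Type*} [MetricSpace X] {n m : ℕ}
    (hnm : n ≤ m) (h : ASDimLE S X n) : ASDimLE S X m := by
  obtain ⟨f, hf, s₀, H⟩ := h
  refine ⟨f, hf, s₀, fun s hs => ?_⟩
  obtain ⟨𝒰, hu, hp⟩ := H s hs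
  exact cover_extend hnm 𝒰 hu hp

lemma gdimLE_split {ξ S : Set (ℝ≥0 → ℝ≥0)} {X : Type*} [MetricSpace X] {n : ℕ}
    (h : GDimLE (Link ξ S) X n) : SMDimLE ξ X n ∧ ASDimLE S X n := by
  obtain ⟨F, ⟨hFc, hFm, g₁, hg₁, g₂, hg₂, h0, hinf⟩, H⟩ := h
  constructor
  · obtain ⟨ε, hε, hev⟩ := NNReal.nhds_zero_basis.eventually_iff.mp h0
    refine ⟨g₁, hg₁, ε/2, by positivity, fun s hs hsε => ?_⟩
    obtain ⟨𝒰, hu, hp⟩ := H s hs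
    refine ⟨𝒰, hu, fun i => ⟨(hp i).1, ?_⟩⟩
    have hFs : F s = g₁ s := hev (lt_of_le_of_lt hsε (NNReal.half_lt_self hε.ne'))
    rw [← hFs]
    exact (hp i).2
  · obtain ⟨a, ha⟩ := eventually_atTop.mp hinf
    refine ⟨g₂, hg₂, max a 1, fun s hs => ?_⟩
    have hs0 : (0 : ℝ≥0) < s := lt_of_lt_of_le one_pos ((le_max_right a 1).trans hs)
    obtain ⟨𝒰, hu, hp⟩ := H s hs0
    refine ⟨𝒰, hu, fun i => ⟨(hp i).1, ?_⟩⟩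
    rw [← ha s ((le_max_left a 1).trans hs)]
    exact (hp i).2

lemma gdimLE_of_both {ξ S : Set (ℝ≥0 → ℝ≥0)} (hξ : IsSSControlSemigroup ξ)
    (hS : IsControlSemigroup S) {X : Type*} [MetricSpace X] {n : ℕ}
    (hsm : SMDimLE ξ X n) (has : ASDimLE S X n) : GDimLE (Link ξ S) X n := by
  obtain ⟨f₁, hf₁m, s₀, hs₀, H₁⟩ := hsm
  obtain ⟨f₂, hf₂m, s₁, H₂⟩ := has
  obtain ⟨hf₁c, hf₁mono, hf₁z, -⟩ := hξ.1 f₁ hf₁m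
  obtain ⟨hf₂c, hf₂mono, -, -⟩ := hS.1 f₂ hf₂m
  set t : ℝ≥0 := max s₁ s₀ with ht
  set u : ℝ≥0 := s₀ / 2 with hudef
  have hu0 : 0 < u := by positivity
  have huu : u + u = s₀ := add_halves s₀
  have hus₀ : u ≤ s₀ := by rw [← huu]; exact le_self_add
  have hs₀t : s₀ ≤ t := le_max_right s₁ s₀
  set c : ℝ≥0 := f₁ s₀ with hc
  set B : ℝ≥0 := f₂ t with hB
  set F : ℝ≥0 → ℝ≥0 :=
    fun s => f₁ (min s s₀) + B * min ((s - u) / u) 1 + (f₂ (max s t) - B) with hF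
  -- the function x ↦ x + c is in S
  have hl : (fun x : ℝ≥0 => x + c) ∈ S := by
    apply hS.2.1
    · exact ⟨continuous_id.add continuous_const, fun a b h => by dsimp only; gcongr,
        Eventually.of_forall (fun x => le_self_add),
        tendsto_atTop_mono (fun x => le_self_add) tendsto_id⟩
    · exact ⟨1, c, Eventually.of_forall (fun x => by rw [one_mul])⟩
  have hg₂mem : (fun x => f₂ x + c) ∈ S := by
    have h' := hS.2.2 _ hl _ hf₂m
    exact h'
  -- small-scale behaviour of F
  have Fsmall : ∀ x : ℝ≥0, x ≤ u → F x = f₁ x := by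
    intro x hx
    have h1 : min x s₀ = x := min_eq_left (hx.trans hus₀)
    have h2 : x - u = 0 := tsub_eq_zero_of_le hx
    have h3 : max x t = t := max_eq_right ((hx.trans hus₀).trans hs₀t)
    simp [hF, h1, h2, h3, tsub_self, hB]
  -- behaviour of F above s₀
  have Fbig : ∀ x : ℝ≥0, s₀ ≤ x → F x = c + f₂ (max x t) := by
    intro x hx
    have h1 : min x s₀ = s₀ := min_eq_right hx
    have hux : u ≤ x := hus₀.trans hx
    have h2 : (1 : ℝ≥0) ≤ (x - u) / u := by
      rw [le_div_iff₀ hu0, one_mul, le_tsub_iff_left hux, huu]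
      exact hx
    have h3 : min ((x - u) / u) 1 = 1 := min_eq_right h2
    have h4 : B ≤ f₂ (max x t) := hf₂mono (le_max_right x t)
    show f₁ (min x s₀) + B * min ((x - u) / u) 1 + (f₂ (max x t) - B) = c + f₂ (max x t)
    rw [h1, h3, mul_one, add_assoc, add_tsub_cancel_of_le h4]
  have Finf : ∀ x : ℝ≥0, t ≤ x → F x = f₂ x + c := by
    intro x hx
    rw [Fbig x (hs₀t.trans hx), max_eq_left hx, add_comm]
  -- continuity and monotonicity of F
  have hFc : Continuous F := by
    refine Continuous.add (Continuous.add ?_ ?_) ?_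
    · exact hf₁c.comp (continuous_id.min continuous_const)
    · exact continuous_const.mul
        (((continuous_id.sub continuous_const).div_const u).min continuous_const)
    · exact (hf₂c.comp (continuous_id.max continuous_const)).sub continuous_const
  have hFm : Monotone F := by
    intro a b hab
    refine add_le_add (add_le_add ?_ ?_) ?_
    · exact hf₁mono (min_le_min hab le_rfl)
    · refine mul_le_mul_right (min_le_min ?_ le_rfl) B
      rw [div_eq_mul_inv, div_eq_mul_inv]
      exact mul_le_mul_left (tsub_le_tsub_right hab u) u⁻¹
    · exact tsub_le_tsub_right (hf₂mono (max_le_max hab le_rfl)) B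
  refine ⟨F, ⟨hFc, hFm, f₁, hf₁m, (fun x => f₂ x + c), hg₂mem, ?_, ?_⟩, ?_⟩
  · exact Filter.eventually_of_mem (Iio_mem_nhds hu0) fun x hx => Fsmall x hx.le
  · exact (eventually_ge_atTop t).mono fun x hx => Finf x hx
  · intro s hs
    by_cases hcase : s ≤ s₀
    · obtain ⟨𝒰, hu, hp⟩ := H₁ s hs hcase
      refine ⟨𝒰, hu, fun i => ⟨(hp i).1, boundedBy_of_le ?_ (hp i).2⟩⟩
      calc f₁ s = f₁ (min s s₀) := by rw [min_eq_left hcase]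
        _ ≤ F s := le_add_right le_self_add
    · push_neg at hcase
      obtain ⟨𝒰, hu, hp⟩ := H₂ (max s t) ((le_max_left s₁ s₀).trans (le_max_right s t))
      refine ⟨𝒰, hu, fun i =>
        ⟨sdisjoint_of_le (le_max_left s t) (hp i).1, boundedBy_of_le ?_ (hp i).2⟩⟩
      rw [Fbig s hcase.le]
      exact le_add_self

theorem gdim_link_eq_max (ξ S : Set (ℝ≥0 → ℝ≥0))
    (hξ : IsSSControlSemigroup ξ) (hS : IsControlSemigroup S)
    (X : Type*) [MetricSpace X] :
    GDim (Link ξ S) X = max (SMDim ξ X) (ASDim S X) := by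
  set A : Set ℕ∞ := {k | ∃ n : ℕ, k = n ∧ SMDimLE ξ X n} with hA
  set Bs : Set ℕ∞ := {k | ∃ n : ℕ, k = n ∧ ASDimLE S X n} with hBs
  have hGset : {k : ℕ∞ | ∃ n : ℕ, k = n ∧ GDimLE (Link ξ S) X n} = A ∩ Bs := by
    ext k
    constructor
    · rintro ⟨n, rfl, hgn⟩
      obtain ⟨h1, h2⟩ := gdimLE_split hgn
      exact ⟨⟨n, rfl, h1⟩, ⟨n, rfl, h2⟩⟩
    · rintro ⟨⟨n, rfl, h1⟩, ⟨m, hm, h2⟩⟩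
      have hnm : n = m := by exact_mod_cast hm
      subst hnm
      exact ⟨n, rfl, gdimLE_of_both hξ hS h1 h2⟩
  show sInf {k : ℕ∞ | ∃ n : ℕ, k = n ∧ GDimLE (Link ξ S) X n} = max (sInf A) (sInf Bs)
  rw [hGset]
  rcases eq_empty_or_nonempty A with hAe | hAne
  · rw [hAe, empty_inter, sInf_empty]
    simp
  rcases eq_empty_or_nonempty Bs with hBe | hBne
  · rw [hBe, inter_empty, sInf_empty]
    simp
  obtain ⟨na, hka, hQa⟩ := csInf_mem hAne
  obtain ⟨nb, hkb, hRb⟩ := csInf_mem hBne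
  apply le_antisymm
  · have hmem : ((max na nb : ℕ) : ℕ∞) ∈ A ∩ Bs :=
      ⟨⟨max na nb, rfl, smdimLE_mono (le_max_left na nb) hQa⟩,
       ⟨max na nb, rfl, asdimLE_mono (le_max_right na nb) hRb⟩⟩
    calc sInf (A ∩ Bs) ≤ ((max na nb : ℕ) : ℕ∞) := sInf_le hmem
      _ = max ((na : ℕ∞)) ((nb : ℕ∞)) := Nat.mono_cast.map_max
      _ = max (sInf A) (sInf Bs) := by rw [hka, hkb]
  · exact max_le (sInf_le_sInf inter_subset_left) (sInf_le_sInf inter_subset_right)
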